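/- One-dimensional truncation lemma: There is a universal constant c > 0 such that the following holds. Let x₁,…,x_n be i.i.d. real random variables from a distribution P with mean μ_P and E[(x − μ_P)²] ≤ σ_P². For 0 < ε ≤ 1/18, define the multiset T = {x_i : |x_i − μ_P| ≤ 3σ_P/√ε} and μ_T = (1/|T|) Σ_{x∈T} x. Then with probability at least 1 − 3exp(−c n ε): (1) |T| ≥ (1−ε)n; (2) |μ_T − μ_P| ≤ σ_P √ε; and (3) (1/|T|) Σ_{x∈T} (x − μ_P)² ≤ 2 σ_P². -/

import Mathlib

open MeasureTheory Matrix
open scoped BigOperators ENNReal NNReal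

noncomputable section

/-- Squared Euclidean norm of a vector in `ℝ^d`. -/
def enormSq {d : ℕ} (x : Fin d → ℝ) : ℝ := ∑ i, x i ^ 2

/-- Euclidean norm of a vector in `ℝ^d`. -/
def euclNorm {d : ℕ} (x : Fin d → ℝ) : ℝ := Real.sqrt (enormSq x)

/-- Frobenius norm of a matrix. -/
def frobNorm {m n : ℕ} (A : Matrix (Fin m) (Fin n) ℝ) : ℝ :=
  Real.sqrt (∑ i, ∑ j, A i j ^ 2)

/-- Spectral norm (ℓ₂ operator norm) of a square matrix. -/
def specNorm {d : ℕ} (A : Matrix (Fin d) (Fin d) ℝ) : ℝ :=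
  ‖Matrix.toEuclideanCLM (𝕜 := ℝ) A‖

theorem Matrix.isHermitian_transpose_mul_self {d : ℕ} (A : Matrix (Fin d) (Fin d) ℝ) :
    (Aᵀ * A).IsHermitian := by
  simpa using Matrix.isHermitian_conjTranspose_mul_self A

/-- Nuclear norm: the sum of the singular values. -/
def nucNorm {d : ℕ} (A : Matrix (Fin d) (Fin d) ℝ) : ℝ :=
  ∑ i, Real.sqrt ((Matrix.isHermitian_transpose_mul_self A).eigenvalues i)

open scoped Classical in
/-- Best rank-`k` approximation of a symmetric matrix: keep the `k` largest eigenvalues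
(ties broken by index) in an eigendecomposition; junk value `0` on non-symmetric input. -/
def Pk {d : ℕ} (k : ℕ) (A : Matrix (Fin d) (Fin d) ℝ) : Matrix (Fin d) (Fin d) ℝ :=
  if hA : A.IsHermitian then
    (hA.eigenvectorUnitary : Matrix (Fin d) (Fin d) ℝ) *
      Matrix.diagonal (fun i =>
        if (Finset.univ.filter fun j =>
              hA.eigenvalues i < hA.eigenvalues j ∨
                (hA.eigenvalues i = hA.eigenvalues j ∧ j < i)).card < k
        then hA.eigenvalues i else 0) *
      star (hA.eigenvectorUnitary : Matrix (Fin d) (Fin d) ℝ)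
  else 0

/-- A `d × k` matrix is semi-orthogonal if `Vᵀ V = I_k`. -/
def IsSemiOrtho {d k : ℕ} (V : Matrix (Fin d) (Fin k) ℝ) : Prop := Vᵀ * V = 1

/-- `U` is a matrix of top-`k` singular vectors of the positive semidefinite matrix `M`:
it is semi-orthogonal and maximizes `Tr(Vᵀ M V)` among semi-orthogonal matrices. -/
def IsTopKSingular {d k : ℕ} (M : Matrix (Fin d) (Fin d) ℝ)
    (U : Matrix (Fin d) (Fin k) ℝ) : Prop :=
  IsSemiOrtho U ∧ ∀ V : Matrix (Fin d) (Fin k) ℝ, IsSemiOrtho V →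
    (Vᵀ * M * V).trace ≤ (Uᵀ * M * U).trace

/-- `s` is an `α`-corruption of the sample `g`: as multisets, `s = (g \ L) ∪ E`
with `L ⊆ g` and `|E| = |L| ≤ α n`. -/
def IsCorruptionOf {V : Type*} (α : ℝ) {n : ℕ} (g s : Fin n → V) : Prop :=
  ∃ L E : Multiset V, L ≤ (List.ofFn g : Multiset V) ∧
    Multiset.card E = Multiset.card L ∧ (Multiset.card L : ℝ) ≤ α * n ∧
    (List.ofFn s : Multiset V) + L = (List.ofFn g : Multiset V) + E

/-- The standard Gaussian measure `N(0, I_d)` on `ℝ^d`. -/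
def stdGaussian (d : ℕ) : Measure (Fin d → ℝ) :=
  Measure.pi fun _ => ProbabilityTheory.gaussianReal 0 1

/-- Total variation distance between two measures. -/
def tvDist {Ω : Type*} [MeasurableSpace Ω] (μ ν : Measure Ω) : ℝ :=
  ⨆ s : Set Ω, |(μ s).toReal - (ν s).toReal|
/-- Matrices over `ℝ` carry the Borel (product) σ-algebra. -/
instance matrixMeasurableSpace {m n : ℕ} : MeasurableSpace (Matrix (Fin m) (Fin n) ℝ) :=
  (inferInstance : MeasurableSpace (Fin m → Fin n → ℝ))

lemma exp_le_one_add_sq {u : ℝ} (hu : u ≤ 1) : Real.exp u ≤ 1 + u + u ^ 2 := by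
  rcases le_or_gt (-1) u with h | h
  · have habs : |u| ≤ 1 := abs_le.2 ⟨h, hu⟩
    have := Real.exp_bound habs (n := 2) (by norm_num)
    have hsum : ∑ m ∈ Finset.range 2, u ^ m / m.factorial = 1 + u := by
      simp [Finset.sum_range_succ]
    rw [hsum] at this
    have h1 := (abs_sub_le_iff.1 this).1
    have h2 : |u| ^ 2 = u ^ 2 := sq_abs u
    norm_num at h1
    nlinarith [sq_nonneg u]
  · have h1 : Real.exp u ≤ 1 := Real.exp_le_one_iff.2 (by linarith)
    nlinarith [Real.exp_pos u]

lemma integrable_of_bounded {α : Type*} [MeasurableSpace α] {Q : Measure α} [IsFiniteMeasure Q]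
    {f : α → ℝ} (hf : Measurable f) (C : ℝ) (h : ∀ v, |f v| ≤ C) : Integrable f Q :=
  Integrable.mono' (integrable_const C) hf.aestronglyMeasurable (Filter.Eventually.of_forall h)

lemma mgf_bound (Q : Measure ℝ) [IsProbabilityMeasure Q] (f : ℝ → ℝ) (hf : Measurable f)
    (t V : ℝ) (ht : 0 ≤ t) (hbd : ∀ v, t * f v ≤ 1)
    (hint1 : Integrable f Q) (hint2 : Integrable (fun v => f v ^ 2) Q)
    (hmean : ∫ v, f v ∂Q ≤ 0) (hvar : ∫ v, f v ^ 2 ∂Q ≤ V) :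
    ∫ v, Real.exp (t * f v) ∂Q ≤ Real.exp (t ^ 2 * V) := by
  have h1 : Integrable (fun v => t * f v) Q := hint1.const_mul t
  have h2 : Integrable (fun v => (t * f v) ^ 2) Q := by
    have : (fun v => (t * f v) ^ 2) = fun v => t ^ 2 * f v ^ 2 := by funext v; ring
    rw [this]; exact hint2.const_mul _
  have hA : Integrable (fun v => 1 + t * f v) Q := (integrable_const (1:ℝ)).add h1
  have hintq : Integrable (fun v => 1 + t * f v + (t * f v) ^ 2) Q := hA.add h2
  have step1 : ∫ v, Real.exp (t * f v) ∂Q ≤ ∫ v, (1 + t * f v + (t * f v) ^ 2) ∂Q := by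
    apply integral_mono _ hintq (fun v => exp_le_one_add_sq (hbd v))
    · apply integrable_of_bounded (hf.const_mul t).exp (Real.exp 1)
      intro v
      rw [abs_of_pos (Real.exp_pos _)]
      exact Real.exp_le_exp.2 (hbd v)
  have step2 : ∫ v, (1 + t * f v + (t * f v) ^ 2) ∂Q
      = 1 + t * ∫ v, f v ∂Q + t ^ 2 * ∫ v, f v ^ 2 ∂Q := by
    rw [integral_add hA h2, integral_add (integrable_const (1:ℝ)) h1, integral_const]
    rw [show (fun v => (t * f v) ^ 2) = fun v => t ^ 2 * f v ^ 2 by funext v; ring,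
      integral_const_mul, integral_const_mul]
    simp [measure_univ]
  have step3 : 1 + t * ∫ v, f v ∂Q + t ^ 2 * ∫ v, f v ^ 2 ∂Q ≤ 1 + t ^ 2 * V := by
    nlinarith [mul_nonneg ht (neg_nonneg.2 hmean), sq_nonneg t]
  calc ∫ v, Real.exp (t * f v) ∂Q ≤ 1 + t ^ 2 * V := by linarith
    _ ≤ Real.exp (t ^ 2 * V) := by linarith [Real.add_one_le_exp (t ^ 2 * V)]

lemma chernoff_tail (n : ℕ) (Q : Measure ℝ) [IsProbabilityMeasure Q] (f : ℝ → ℝ)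
    (hf : Measurable f) (t V s : ℝ) (ht : 0 < t) (hbd : ∀ v, t * f v ≤ 1)
    (hint1 : Integrable f Q) (hint2 : Integrable (fun v => f v ^ 2) Q)
    (hmean : ∫ v, f v ∂Q ≤ 0) (hvar : ∫ v, f v ^ 2 ∂Q ≤ V) :
    (Measure.pi fun _ : Fin n => Q) {x | s ≤ ∑ i, f (x i)}
      ≤ ENNReal.ofReal (Real.exp ((n : ℝ) * (t ^ 2 * V) - t * s)) := by
  classical
  letI : MeasureSpace ℝ := ⟨Q⟩
  have hvol : (Measure.pi fun _ : Fin n => Q) = (volume : Measure (Fin n → ℝ)) := rfl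
  set M : ℝ := ∫ v, Real.exp (t * f v) ∂Q with hM
  have hM0 : 0 ≤ M := integral_nonneg fun v => (Real.exp_pos _).le
  have hMle : M ≤ Real.exp (t ^ 2 * V) := mgf_bound Q f hf t V ht.le hbd hint1 hint2 hmean hvar
  set F : (Fin n → ℝ) → ℝ := fun x => Real.exp (∑ i, t * f (x i)) with hF
  have hFmeas : Measurable F := by
    apply Real.measurable_exp.comp
    exact Finset.measurable_sum _ fun i _ => ((hf.comp (measurable_pi_apply i)).const_mul t)
  have hFint : Integrable F (volume : Measure (Fin n → ℝ)) := by
    apply integrable_of_bounded hFmeas (Real.exp n)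
    intro x
    rw [abs_of_pos (Real.exp_pos _)]
    apply Real.exp_le_exp.2
    calc ∑ i, t * f (x i) ≤ ∑ _i : Fin n, (1 : ℝ) := Finset.sum_le_sum fun i _ => hbd _
      _ = n := by simp
  have hFprod : ∫ x, F x = M ^ n := by
    rw [hF]
    simp_rw [Real.exp_sum]
    rw [integral_fintype_prod_volume_eq_pow (ι := Fin n) (fun v => Real.exp (t * f v))]
    simp only [hM, Fintype.card_fin]
    rfl
  have hnn : 0 ≤ᵐ[(volume : Measure (Fin n → ℝ))] F :=
    Filter.Eventually.of_forall fun x => (Real.exp_pos _).le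
  have hmar := mul_meas_ge_le_integral_of_nonneg hnn hFint (Real.exp (t * s))
  have hsub : {x : Fin n → ℝ | s ≤ ∑ i, f (x i)} ⊆ {x | Real.exp (t * s) ≤ F x} := by
    intro x hx
    simp only [Set.mem_setOf_eq] at *
    apply Real.exp_le_exp.2
    rw [← Finset.mul_sum]
    exact mul_le_mul_of_nonneg_left hx ht.le
  set E := (volume : Measure (Fin n → ℝ)) {x : Fin n → ℝ | s ≤ ∑ i, f (x i)} with hE
  have h2' : E.toReal ≤ ((volume : Measure (Fin n → ℝ)) {x | Real.exp (t * s) ≤ F x}).toReal :=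
    ENNReal.toReal_mono (measure_ne_top _ _) (measure_mono hsub)
  have key : Real.exp (t * s) * E.toReal ≤ Real.exp ((n : ℝ) * (t ^ 2 * V)) := by
    calc Real.exp (t * s) * E.toReal
        ≤ Real.exp (t * s) * ((volume : Measure (Fin n → ℝ)) {x | Real.exp (t * s) ≤ F x}).toReal :=
          mul_le_mul_of_nonneg_left h2' (Real.exp_pos _).le
      _ ≤ ∫ x, F x := hmar
      _ = M ^ n := hFprod
      _ ≤ Real.exp (t ^ 2 * V) ^ n := pow_le_pow_left₀ hM0 hMle n
      _ = Real.exp ((n : ℝ) * (t ^ 2 * V)) := (Real.exp_nat_mul _ n).symm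
  have hfinal : E.toReal ≤ Real.exp ((n : ℝ) * (t ^ 2 * V) - t * s) := by
    rw [Real.exp_sub, le_div_iff₀ (Real.exp_pos _)]
    linarith [key]
  calc (Measure.pi fun _ : Fin n => Q) {x | s ≤ ∑ i, f (x i)}
      = ENNReal.ofReal E.toReal := by rw [hvol, ← hE, ENNReal.ofReal_toReal (measure_ne_top _ _)]
    _ ≤ ENNReal.ofReal (Real.exp ((n : ℝ) * (t ^ 2 * V) - t * s)) :=
        ENNReal.ofReal_le_ofReal hfinal


set_option maxHeartbeats 4000000 in
/-- **One-dimensional truncation lemma.** For i.i.d. samples from a distribution with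
mean `μP` and second central moment at most `σP²`, the sub-sample `T` obtained by keeping
points within `3σP/√ε` of `μP` has, with probability at least `1 − 3 exp(−c n ε)`,
cardinality at least `(1 − ε)n`, mean within `σP √ε` of `μP`, and second central moment
(around `μP`) at most `2 σP²`. -/
theorem one_dim_truncation :
    ∃ c : ℝ, 0 < c ∧
      ∀ (n : ℕ) (P : Measure ℝ) [IsProbabilityMeasure P], ∀ (μP σP ε : ℝ),
        0 ≤ σP → 0 < ε → ε ≤ 1 / 18 →
        Integrable (fun x : ℝ => x) P → (∫ x, x ∂P) = μP →
        Integrable (fun x : ℝ => (x - μP) ^ 2) P →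
        (∫ x, (x - μP) ^ 2 ∂P) ≤ σP ^ 2 →
        ENNReal.ofReal (1 - 3 * Real.exp (-(c * n * ε))) ≤
          (Measure.pi fun _ : Fin n => P)
            {x | ∀ T : Finset (Fin n),
                (∀ i, i ∈ T ↔ |x i - μP| ≤ 3 * σP / Real.sqrt ε) →
                (1 - ε) * n ≤ (T.card : ℝ) ∧
                |(T.card : ℝ)⁻¹ * ∑ i ∈ T, x i - μP| ≤ σP * Real.sqrt ε ∧
                (T.card : ℝ)⁻¹ * ∑ i ∈ T, (x i - μP) ^ 2 ≤ 2 * σP ^ 2} := by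
  classical
  refine ⟨1/120, by norm_num, ?_⟩
  intro n P _ μP σP ε hσ hε hε18 hintx hmeanx hint2 hvar2
  rcases le_or_gt (1 - 3 * Real.exp (-(1/120 * n * ε))) 0 with h0 | h0
  · rw [ENNReal.ofReal_of_nonpos h0]; exact zero_le
  have hn : 0 < n := by
    rcases Nat.eq_zero_or_pos n with h | h
    · subst h; norm_num at h0
    · exact h
  have hn1 : (1:ℝ) ≤ (n:ℝ) := Nat.one_le_cast.2 hn
  have hnn : (0:ℝ) ≤ (n:ℝ) := by linarith
  set sε := Real.sqrt ε with hsεdef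
  have hsε : 0 < sε := Real.sqrt_pos.2 hε
  have hsε2 : sε ^ 2 = ε := Real.sq_sqrt hε.le
  have hofle1 : ENNReal.ofReal (1 - 3 * Real.exp (-(1/120 * n * ε))) ≤ 1 := by
    rw [← ENNReal.ofReal_one]
    exact ENNReal.ofReal_le_ofReal (by linarith only [Real.exp_pos (-(1/120 * (n:ℝ) * ε))])
  rcases eq_or_lt_of_le hσ with hσ0 | hσp
  · -- degenerate case σP = 0
    have hσ0' : σP = 0 := hσ0.symm
    subst hσ0'
    have hzero : ∫ v, (v - μP)^2 ∂P = 0 :=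
      le_antisymm (by simpa using hvar2) (integral_nonneg fun v => sq_nonneg _)
    have hae : ∀ᵐ v ∂P, v = μP := by
      have h2 := (integral_eq_zero_iff_of_nonneg (fun v => sq_nonneg _) hint2).1 hzero
      filter_upwards [h2] with v hv
      have hv' : (v - μP)^2 = 0 := hv
      have := pow_eq_zero_iff (n := 2) (by norm_num) |>.1 hv'
      linarith [sub_eq_zero.1 this]
    have hP1 : P {μP} = 1 := by
      rw [← prob_compl_eq_zero_iff (measurableSet_singleton μP)]
      have hc : ({μP} : Set ℝ)ᶜ = {a : ℝ | ¬ a = μP} := by ext a; simp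
      rw [hc]
      exact ae_iff.1 hae
    have hfull : (Measure.pi fun _ : Fin n => P)
        (Set.univ.pi fun _ : Fin n => ({μP} : Set ℝ)) = 1 := by
      rw [Measure.pi_pi]
      simp [hP1]
    refine le_trans hofle1 ?_
    rw [← hfull]
    apply measure_mono
    intro x hx
    simp only [Set.mem_pi, Set.mem_univ, Set.mem_singleton_iff, forall_true_left] at hx
    intro T hT
    have hTuniv : T = Finset.univ := by
      apply Finset.eq_univ_iff_forall.2
      intro i
      apply (hT i).2
      rw [hx i]
      simp
    subst hTuniv
    have hcard : ((Finset.univ : Finset (Fin n)).card : ℝ) = n := by simp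
    refine ⟨by rw [hcard]; linarith only [mul_nonneg hε.le hnn], ?_, ?_⟩
    · have hsum : ∑ i : Fin n, x i = n * μP := by
        rw [Finset.sum_congr rfl fun i _ => hx i, Finset.sum_const, Finset.card_univ,
          Fintype.card_fin, nsmul_eq_mul]
      have hne : (n:ℝ) ≠ 0 := by positivity
      rw [hcard, hsum]
      rw [inv_mul_cancel_left₀ hne]
      simp
    · have hsum : ∑ i : Fin n, (x i - μP)^2 = 0 := by
        apply Finset.sum_eq_zero
        intro i _
        rw [hx i]; ring
      rw [hcard, hsum]
      norm_num
  -- main case σP > 0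
  set B := 3 * σP / sε with hBdef
  have hB : 0 < B := by positivity
  have hB2 : B ^ 2 = 9 * σP ^ 2 / ε := by
    rw [hBdef, div_pow, hsε2]; ring_nf
  have hσne : σP ≠ 0 := ne_of_gt hσp
  have hεne : ε ≠ 0 := ne_of_gt hε
  have hsεne : sε ≠ 0 := ne_of_gt hsε
  set w : ℝ → ℝ := fun v => if |v - μP| ≤ B then 0 else 1 with hw
  set z : ℝ → ℝ := fun v => if |v - μP| ≤ B then v - μP else 0 with hz
  set y : ℝ → ℝ := fun v => if |v - μP| ≤ B then (v - μP)^2 else 0 with hy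
  have hS : MeasurableSet {v : ℝ | |v - μP| ≤ B} :=
    measurableSet_le (measurable_id.sub measurable_const).abs measurable_const
  have hwm : Measurable w := Measurable.ite hS measurable_const measurable_const
  have hzm : Measurable z :=
    Measurable.ite hS (measurable_id.sub measurable_const) measurable_const
  have hym : Measurable y :=
    Measurable.ite hS ((measurable_id.sub measurable_const).pow_const 2) measurable_const
  have hw01 : ∀ v, 0 ≤ w v ∧ w v ≤ 1 := by
    intro v; rw [hw]; dsimp only; split <;> norm_num
  have hwb : ∀ v, |w v| ≤ 1 := by
    intro v
    rw [abs_le]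
    exact ⟨by linarith [(hw01 v).1], (hw01 v).2⟩
  have hzb : ∀ v, |z v| ≤ B := by
    intro v; rw [hz]; dsimp only; split
    · assumption
    · simpa using hB.le
  have hyb : ∀ v, 0 ≤ y v ∧ y v ≤ B ^ 2 := by
    intro v; rw [hy]; dsimp only; split
    · refine ⟨by positivity, ?_⟩
      rename_i h
      calc (v - μP)^2 = |v - μP|^2 := (sq_abs _).symm
        _ ≤ B ^ 2 := pow_le_pow_left₀ (abs_nonneg _) (by assumption) 2
    · exact ⟨le_refl 0, by positivity⟩
  have hybabs : ∀ v, |y v| ≤ B ^ 2 := fun v => by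
    rw [abs_of_nonneg (hyb v).1]; exact (hyb v).2
  have int_w : Integrable w P := integrable_of_bounded hwm 1 hwb
  have int_z : Integrable z P := integrable_of_bounded hzm B hzb
  have int_y : Integrable y P := integrable_of_bounded hym (B^2) hybabs
  have sqb : ∀ (g : ℝ → ℝ) (C : ℝ), (∀ v, |g v| ≤ C) → ∀ v, |g v ^ 2| ≤ C^2 := by
    intro g C hg v
    rw [abs_pow]
    exact pow_le_pow_left₀ (abs_nonneg _) (hg v) 2
  have int_w2 : Integrable (fun v => w v ^ 2) P :=
    integrable_of_bounded (hwm.pow_const 2) 1 (fun v => by simpa using sqb w 1 hwb v)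
  have int_z2 : Integrable (fun v => z v ^ 2) P :=
    integrable_of_bounded (hzm.pow_const 2) (B^2) (sqb z B hzb)
  have int_y2 : Integrable (fun v => y v ^ 2) P :=
    integrable_of_bounded (hym.pow_const 2) ((B^2)^2) (sqb y (B^2) hybabs)
  -- moment bounds
  have hw_pt : ∀ v, w v ≤ (v - μP)^2 / B^2 := by
    intro v; rw [hw]; dsimp only; split
    · positivity
    · rename_i h; push_neg at h
      rw [le_div_iff₀ (by positivity), one_mul, ← sq_abs (v - μP)]
      exact pow_le_pow_left₀ hB.le h.le 2
  have hw_mean : ∫ v, w v ∂P ≤ ε / 9 := by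
    calc ∫ v, w v ∂P ≤ ∫ v, (v - μP)^2 / B^2 ∂P :=
        integral_mono int_w (hint2.div_const _) hw_pt
      _ = (∫ v, (v - μP)^2 ∂P) / B^2 := integral_div _ _
      _ ≤ σP^2 / B^2 := by gcongr
      _ = ε / 9 := by rw [hB2]; field_simp
  have hw_nonneg : 0 ≤ ∫ v, w v ∂P := integral_nonneg fun v => (hw01 v).1
  have hwsq : (fun v => w v ^ 2) = w := by
    funext v; rw [hw]; dsimp only; split <;> norm_num
  have hsubint : Integrable (fun v => v - μP) P := hintx.sub (integrable_const μP)
  have hsubmean : ∫ v, (v - μP) ∂P = 0 := by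
    rw [integral_sub hintx (integrable_const μP), hmeanx, integral_const]
    simp [measure_univ]
  set m0 : ℝ := σP * sε / 3 with hm0def
  have hm0nn : 0 ≤ m0 := by positivity
  have hm0 : σP ^ 2 / B = m0 := by rw [hBdef, hm0def]; field_simp
  have hm0sq : m0 ^ 2 = σP ^ 2 * ε / 9 := by
    rw [hm0def, div_pow, mul_pow, hsε2]; ring
  have hg_pt : ∀ v, |(v - μP) - z v| ≤ (v - μP)^2 / B := by
    intro v; rw [hz]; dsimp only; split
    · simp only [sub_self, abs_zero]; positivity
    · rename_i h; push_neg at h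
      rw [sub_zero, le_div_iff₀ hB, ← sq_abs, sq]
      exact mul_le_mul_of_nonneg_left h.le (abs_nonneg _)
  have hgint : Integrable (fun v => (v - μP) - z v) P := hsubint.sub int_z
  have hzmean : |∫ v, z v ∂P| ≤ m0 := by
    have h1 : ∫ v, z v ∂P = - ∫ v, ((v - μP) - z v) ∂P := by
      rw [integral_sub hsubint int_z, hsubmean]; ring
    rw [h1, abs_neg]
    calc |∫ v, ((v - μP) - z v) ∂P| ≤ ∫ v, |(v - μP) - z v| ∂P := by
          simpa [Real.norm_eq_abs] using norm_integral_le_integral_norm (μ := P)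
            (f := fun v => (v - μP) - z v)
      _ ≤ ∫ v, (v - μP)^2 / B ∂P := integral_mono hgint.abs (hint2.div_const _) hg_pt
      _ = (∫ v, (v - μP)^2 ∂P) / B := integral_div _ _
      _ ≤ σP ^ 2 / B := by gcongr
      _ = m0 := hm0
  have hzmean1 : -m0 ≤ ∫ v, z v ∂P := (abs_le.1 hzmean).1
  have hzmean2 : ∫ v, z v ∂P ≤ m0 := (abs_le.1 hzmean).2
  have hz_sq : ∫ v, z v ^ 2 ∂P ≤ σP ^ 2 := by
    refine le_trans (integral_mono int_z2 hint2 ?_) hvar2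
    intro v; rw [hz]; dsimp only; split_ifs
    · exact le_refl _
    · simpa using sq_nonneg (v - μP)
  have hy_mean : ∫ v, y v ∂P ≤ σP ^ 2 := by
    refine le_trans (integral_mono int_y hint2 ?_) hvar2
    intro v; rw [hy]; dsimp only; split_ifs
    · exact le_refl _
    · exact sq_nonneg (v - μP)
  have hy_nonneg : 0 ≤ ∫ v, y v ∂P := integral_nonneg fun v => (hyb v).1
  have hy_sq : ∫ v, y v ^ 2 ∂P ≤ B ^ 2 * σP ^ 2 := by
    calc ∫ v, y v ^ 2 ∂P ≤ ∫ v, B^2 * y v ∂P := by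
          apply integral_mono int_y2 (int_y.const_mul _)
          intro v
          show y v ^ 2 ≤ B ^ 2 * y v
          rw [sq]
          exact mul_le_mul_of_nonneg_right (hyb v).2 (hyb v).1
      _ = B^2 * ∫ v, y v ∂P := integral_const_mul _ _
      _ ≤ B^2 * σP^2 := by
          apply mul_le_mul_of_nonneg_left hy_mean (by positivity)
  -- centered second moment expansion
  have hcsq : ∀ (g : ℝ → ℝ) (a : ℝ), Integrable g P → Integrable (fun v => g v ^ 2) P →
      ∫ v, (g v - a)^2 ∂P = ∫ v, g v ^ 2 ∂P - 2*a*(∫ v, g v ∂P) + a^2 := by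
    intro g a hg hg2
    have hmul : Integrable (fun v => 2*a*g v) P := hg.const_mul (2*a)
    have hA : Integrable (fun v => g v^2 - 2*a*g v) P := hg2.sub hmul
    have h1 : (fun v => (g v - a)^2) = fun v => (g v^2 - 2*a*g v) + a^2 := by
      funext v; ring
    rw [h1, integral_add hA (integrable_const _), integral_sub hg2 hmul,
      integral_const_mul, integral_const]
    simp [measure_univ]
  have hmeansub : ∀ (g : ℝ → ℝ) (a : ℝ), Integrable g P →
      ∫ v, (g v - a) ∂P = (∫ v, g v ∂P) - a := by
    intro g a hg
    rw [integral_sub hg (integrable_const _), integral_const]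
    simp [measure_univ]
  set μpi := (Measure.pi fun _ : Fin n => P) with hμpi
  set e60 : ℝ := Real.exp (-((n:ℝ) * ε / 60)) with he60
  have he60pos : 0 < e60 := Real.exp_pos _
  -- tail bound 1 : number of outliers
  have hbad1 : μpi {x | 8/9*ε*n ≤ ∑ i, (w (x i) - ε/9)} ≤ ENNReal.ofReal e60 := by
    refine le_trans (chernoff_tail n P (fun v => w v - ε/9) (hwm.sub measurable_const)
      (1/2) ε (8/9*ε*n) (by norm_num)
      (fun v => by
        show 1/2 * (w v - ε/9) ≤ 1
        linarith only [(hw01 v).1, (hw01 v).2, hε.le])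
      (int_w.sub (integrable_const _))
      (integrable_of_bounded ((hwm.sub measurable_const).pow_const 2) 4
        (fun v => by
          have h := sqb (fun v => w v - ε/9) 2
            (fun v => by
              rw [abs_le]
              refine ⟨show -2 ≤ w v - ε/9 by linarith only [(hw01 v).1, hε.le, hε18],
                show w v - ε/9 ≤ 2 by linarith only [(hw01 v).2, hε.le]⟩) v
          norm_num at h ⊢
          linarith))
      (by rw [hmeansub w (ε/9) int_w]; linarith only [hw_mean])
      (by
        rw [hcsq w (ε/9) int_w int_w2, hwsq]
        linarith only [hw_mean, hw_nonneg, mul_nonneg hε.le hw_nonneg,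
          mul_le_mul_of_nonneg_right hε18 hε.le, hε.le]))
      (ENNReal.ofReal_le_ofReal (Real.exp_le_exp.2 ?_))
    have hexp1 : (n:ℝ)*((1/2)^2*ε) - 1/2*(8/9*ε*n) = -((n:ℝ)*ε*7/36) := by ring
    rw [hexp1]
    linarith only [mul_nonneg hnn hε.le]
  -- tail bound 2 : upper deviation of truncated sum
  have hbad2 : μpi {x | σP*sε*n/2 ≤ ∑ i, (z (x i) - m0)} ≤ ENNReal.ofReal e60 := by
    have htB : sε/(8*σP) * B = 3/8 := by rw [hBdef]; field_simp
    refine le_trans (chernoff_tail n P (fun v => z v - m0) (hzm.sub measurable_const)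
      (sε/(8*σP)) (2*σP^2) (σP*sε*n/2) (by positivity)
      (fun v => by
        show sε/(8*σP) * (z v - m0) ≤ 1
        have h1 : z v - m0 ≤ B := by linarith only [hzb v, le_abs_self (z v), hm0nn]
        have h2 : sε/(8*σP) * B = 3/8 := by rw [hBdef]; field_simp
        have h3 := mul_le_mul_of_nonneg_left h1 (by positivity : (0:ℝ) ≤ sε/(8*σP))
        linarith only [h2, h3])
      (int_z.sub (integrable_const _))
      (integrable_of_bounded ((hzm.sub measurable_const).pow_const 2) ((B+m0)^2)
        (fun v => by
          apply sqb (fun v => z v - m0) (B+m0)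
            (fun v => by
              have h := abs_le.1 (hzb v)
              rw [abs_le]
              refine ⟨show -(B+m0) ≤ z v - m0 by linarith [h.1, hm0nn],
                show z v - m0 ≤ B + m0 by linarith [h.2, hm0nn]⟩)))
      (by rw [hmeansub z m0 int_z]; linarith only [hzmean2])
      (by
        rw [hcsq z m0 int_z int_z2]
        have hp : m0 * (-m0) ≤ m0 * (∫ v, z v ∂P) := mul_le_mul_of_nonneg_left hzmean1 hm0nn
        have hq : σP^2 * ε ≤ σP^2 * (1/18) := mul_le_mul_of_nonneg_left hε18 (sq_nonneg σP)
        linarith only [hz_sq, hp, hq, hm0sq, sq_nonneg σP]))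
      (ENNReal.ofReal_le_ofReal (Real.exp_le_exp.2 ?_))
    have hexp2 : (n:ℝ)*((sε/(8*σP))^2*(2*σP^2)) - (sε/(8*σP))*(σP*sε*n/2)
        = -((n:ℝ)*ε/32) := by
      rw [← hsε2]; field_simp; ring
    rw [hexp2]
    linarith only [mul_nonneg hnn hε.le]
  -- tail bound 3 : lower deviation
  have hbad3 : μpi {x | σP*sε*n/2 ≤ ∑ i, (-z (x i) - m0)} ≤ ENNReal.ofReal e60 := by
    have hnegsq : (fun v => (-z v)^2) = fun v => z v ^ 2 := by funext v; ring
    refine le_trans (chernoff_tail n P (fun v => -z v - m0) (hzm.neg.sub measurable_const)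
      (sε/(8*σP)) (2*σP^2) (σP*sε*n/2) (by positivity)
      (fun v => by
        show sε/(8*σP) * (-z v - m0) ≤ 1
        have h1 : -z v - m0 ≤ B := by linarith only [hzb v, neg_le_abs (z v), hm0nn]
        have h2 : sε/(8*σP) * B = 3/8 := by rw [hBdef]; field_simp
        have h3 := mul_le_mul_of_nonneg_left h1 (by positivity : (0:ℝ) ≤ sε/(8*σP))
        linarith only [h2, h3])
      (int_z.neg.sub (integrable_const _))
      (integrable_of_bounded ((hzm.neg.sub measurable_const).pow_const 2) ((B+m0)^2)
        (fun v => by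
          apply sqb (fun v => -z v - m0) (B+m0)
            (fun v => by
              have h := abs_le.1 (hzb v)
              rw [abs_le]
              refine ⟨show -(B+m0) ≤ -z v - m0 by linarith [h.2, hm0nn],
                show -z v - m0 ≤ B + m0 by linarith [h.1, hm0nn]⟩)))
      (by
        rw [hmeansub (fun v => -z v) m0 int_z.neg, integral_neg]
        linarith only [hzmean1])
      (by
        rw [hcsq (fun v => -z v) m0 int_z.neg (by rw [hnegsq]; exact int_z2), hnegsq,
          integral_neg]
        have hp : m0 * (∫ v, z v ∂P) ≤ m0 * m0 := mul_le_mul_of_nonneg_left hzmean2 hm0nn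
        have hq : σP^2 * ε ≤ σP^2 * (1/18) := mul_le_mul_of_nonneg_left hε18 (sq_nonneg σP)
        linarith only [hz_sq, hp, hq, hm0sq, sq_nonneg σP]))
      (ENNReal.ofReal_le_ofReal (Real.exp_le_exp.2 ?_))
    have hexp2 : (n:ℝ)*((sε/(8*σP))^2*(2*σP^2)) - (sε/(8*σP))*(σP*sε*n/2)
        = -((n:ℝ)*ε/32) := by
      rw [← hsε2]; field_simp; ring
    rw [hexp2]
    linarith only [mul_nonneg hnn hε.le]
  -- tail bound 4 : truncated second moment
  have hbad4 : μpi {x | 8/9*σP^2*n ≤ ∑ i, (y (x i) - σP^2)} ≤ ENNReal.ofReal e60 := by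
    have htB : ε/(20*σP^2) * (9*σP^2/ε) = 9/20 := by field_simp
    have hV4 : B^2*σP^2 + σP^2*σP^2 ≤ 10*σP^2*σP^2/ε := by
      rw [hB2, le_div_iff₀ hε]
      field_simp
      nlinarith only [hε18, hε.le, sq_nonneg (σP^2), hσp, sq_nonneg σP,
        mul_le_mul_of_nonneg_left hε18 (mul_nonneg (sq_nonneg σP) (sq_nonneg σP))]
    refine le_trans (chernoff_tail n P (fun v => y v - σP^2) (hym.sub measurable_const)
      (ε/(20*σP^2)) (10*σP^2*σP^2/ε) (8/9*σP^2*n) (by positivity)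
      (fun v => by
        show ε/(20*σP^2) * (y v - σP^2) ≤ 1
        have h1 := (hyb v).2
        rw [hB2] at h1
        have ht0 : (0:ℝ) ≤ ε/(20*σP^2) := by positivity
        linarith only [mul_le_mul_of_nonneg_left h1 ht0, htB,
          mul_nonneg ht0 (sq_nonneg σP)])
      (int_y.sub (integrable_const _))
      (integrable_of_bounded ((hym.sub measurable_const).pow_const 2) ((B^2+σP^2)^2)
        (fun v => by
          apply sqb (fun v => y v - σP^2) (B^2+σP^2)
            (fun v => by
              rw [abs_le]
              refine ⟨show -(B^2+σP^2) ≤ y v - σP^2 by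
                  linarith [(hyb v).1, sq_nonneg B],
                show y v - σP^2 ≤ B^2 + σP^2 by linarith [(hyb v).2, sq_nonneg σP]⟩)))
      (by rw [hmeansub y (σP^2) int_y]; linarith only [hy_mean])
      (by
        rw [hcsq y (σP^2) int_y int_y2]
        linarith only [hy_sq, mul_nonneg (sq_nonneg σP) hy_nonneg, hV4]))
      (ENNReal.ofReal_le_ofReal (Real.exp_le_exp.2 ?_))
    have hexp4 : (n:ℝ)*((ε/(20*σP^2))^2*(10*σP^2*σP^2/ε)) - (ε/(20*σP^2))*(8/9*σP^2*n)
        = -((n:ℝ)*ε*7/360) := by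
      field_simp; ring
    rw [hexp4]
    linarith only [mul_nonneg hnn hε.le]
  -- good event
  set G : Set (Fin n → ℝ) := {x | (∑ i, w (x i)) ≤ ε*n ∧
      |∑ i, z (x i)| ≤ 5/6*(σP*sε)*n ∧ (∑ i, y (x i)) ≤ 17/9*σP^2*n} with hGdef
  have hGm : MeasurableSet G := by
    have m1 : Measurable fun x : Fin n → ℝ => ∑ i, w (x i) :=
      Finset.measurable_sum _ fun i _ => hwm.comp (measurable_pi_apply i)
    have m2 : Measurable fun x : Fin n → ℝ => ∑ i, z (x i) :=
      Finset.measurable_sum _ fun i _ => hzm.comp (measurable_pi_apply i)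
    have m3 : Measurable fun x : Fin n → ℝ => ∑ i, y (x i) :=
      Finset.measurable_sum _ fun i _ => hym.comp (measurable_pi_apply i)
    exact (measurableSet_le m1 measurable_const).inter
      ((measurableSet_le m2.abs measurable_const).inter
        (measurableSet_le m3 measurable_const))
  -- complement of G covered by four tail events
  have hGc : Gᶜ ⊆ {x : Fin n → ℝ | 8/9*ε*n ≤ ∑ i, (w (x i) - ε/9)} ∪
      ({x | σP*sε*n/2 ≤ ∑ i, (z (x i) - m0)} ∪
        ({x | σP*sε*n/2 ≤ ∑ i, (-z (x i) - m0)} ∪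
          {x | 8/9*σP^2*n ≤ ∑ i, (y (x i) - σP^2)})) := by
    intro x hx
    simp only [hGdef, Set.mem_compl_iff, Set.mem_setOf_eq, not_and_or, not_le] at hx
    have hsumw : ∑ i, (w (x i) - ε/9) = (∑ i, w (x i)) - n*(ε/9) := by
      rw [Finset.sum_sub_distrib, Finset.sum_const, Finset.card_univ, Fintype.card_fin,
        nsmul_eq_mul]
    have hsumz : ∑ i, (z (x i) - m0) = (∑ i, z (x i)) - n*m0 := by
      rw [Finset.sum_sub_distrib, Finset.sum_const, Finset.card_univ, Fintype.card_fin,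
        nsmul_eq_mul]
    have hsumz' : ∑ i, (-z (x i) - m0) = -(∑ i, z (x i)) - n*m0 := by
      rw [Finset.sum_sub_distrib, Finset.sum_const, Finset.card_univ, Fintype.card_fin,
        nsmul_eq_mul, Finset.sum_neg_distrib]
    have hsumy : ∑ i, (y (x i) - σP^2) = (∑ i, y (x i)) - n*σP^2 := by
      rw [Finset.sum_sub_distrib, Finset.sum_const, Finset.card_univ, Fintype.card_fin,
        nsmul_eq_mul]
    have hm0n : (n:ℝ)*m0 = σP*sε*n/3 := by rw [hm0def]; ring
    rcases hx with h | h | h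
    · left
      simp only [Set.mem_setOf_eq, hsumw]
      linarith only [h]
    · right
      rcases lt_abs.1 h with h' | h'
      · left
        simp only [Set.mem_setOf_eq, hsumz]
        linarith only [h', hm0n]
      · right; left
        simp only [Set.mem_setOf_eq, hsumz']
        linarith only [h', hm0n]
    · right; right; right
      simp only [Set.mem_setOf_eq, hsumy]
      linarith only [h]
  -- G is contained in the target event
  have hGsub : G ⊆ {x : Fin n → ℝ | ∀ T : Finset (Fin n),
      (∀ i, i ∈ T ↔ |x i - μP| ≤ 3 * σP / sε) →
      (1 - ε) * n ≤ (T.card : ℝ) ∧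
      |(T.card : ℝ)⁻¹ * ∑ i ∈ T, x i - μP| ≤ σP * sε ∧
      (T.card : ℝ)⁻¹ * ∑ i ∈ T, (x i - μP) ^ 2 ≤ 2 * σP ^ 2} := by
    intro x hx
    obtain ⟨hx1, hx2, hx3⟩ := hx
    intro T hT
    have hwT : ∀ i, w (x i) = if i ∈ T then (0:ℝ) else 1 := by
      intro i
      by_cases h : i ∈ T
      · rw [if_pos h, hw]; exact if_pos ((hT i).1 h)
      · rw [if_neg h, hw]; exact if_neg (fun c => h ((hT i).2 c))
    have hzT : ∀ i, z (x i) = if i ∈ T then x i - μP else 0 := by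
      intro i
      by_cases h : i ∈ T
      · rw [if_pos h, hz]; exact if_pos ((hT i).1 h)
      · rw [if_neg h, hz]; exact if_neg (fun c => h ((hT i).2 c))
    have hyT : ∀ i, y (x i) = if i ∈ T then (x i - μP)^2 else 0 := by
      intro i
      by_cases h : i ∈ T
      · rw [if_pos h, hy]; exact if_pos ((hT i).1 h)
      · rw [if_neg h, hy]; exact if_neg (fun c => h ((hT i).2 c))
    have hcard : (∑ i, w (x i)) = (n : ℝ) - T.card := by
      rw [Finset.sum_congr rfl (fun i _ => hwT i)]
      have h2 : ∀ i : Fin n, (if i ∈ T then (0:ℝ) else 1)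
          = 1 - (if i ∈ T then (1:ℝ) else 0) := fun i => by split <;> ring
      rw [Finset.sum_congr rfl fun i _ => h2 i, Finset.sum_sub_distrib, Finset.sum_const,
        Finset.card_univ, Fintype.card_fin, nsmul_eq_mul, Finset.sum_ite_mem,
        Finset.univ_inter, Finset.sum_const, nsmul_eq_mul]
      ring
    have hcard_ge : (1 - ε) * n ≤ (T.card : ℝ) := by linarith only [hx1, hcard.le, hcard.symm.le]
    have hεn : ε * (n:ℝ) ≤ (1/18) * (n:ℝ) := mul_le_mul_of_nonneg_right hε18 hnn
    have hTpos : 0 < (T.card : ℝ) := by linarith only [hcard_ge, hεn, hn1]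
    have hzsum : ∑ i, z (x i) = ∑ i ∈ T, (x i - μP) := by
      rw [Finset.sum_congr rfl (fun i _ => hzT i), Finset.sum_ite_mem, Finset.univ_inter]
    have hysum : ∑ i, y (x i) = ∑ i ∈ T, (x i - μP)^2 := by
      rw [Finset.sum_congr rfl (fun i _ => hyT i), Finset.sum_ite_mem, Finset.univ_inter]
    refine ⟨hcard_ge, ?_, ?_⟩
    · have hsplit : ∑ i ∈ T, x i = (∑ i ∈ T, (x i - μP)) + T.card * μP := by
        rw [Finset.sum_sub_distrib, Finset.sum_const, nsmul_eq_mul]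
        ring
      have hc0 : (T.card:ℝ) ≠ 0 := ne_of_gt hTpos
      have heq : (T.card:ℝ)⁻¹ * ∑ i ∈ T, x i - μP = (T.card:ℝ)⁻¹ * ∑ i, z (x i) := by
        rw [hzsum, hsplit, mul_add, inv_mul_cancel_left₀ hc0]
        ring
      rw [heq, abs_mul, abs_inv, abs_of_pos hTpos, inv_mul_le_iff₀ hTpos]
      calc |∑ i, z (x i)| ≤ 5/6*(σP*sε)*n := hx2
        _ ≤ (T.card:ℝ) * (σP * sε) := by
            have hmul := mul_le_mul_of_nonneg_left hcard_ge (mul_nonneg hσp.le hsε.le)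
            have h18 : ε * (σP * sε * n) ≤ (1/18) * (σP * sε * n) :=
              mul_le_mul_of_nonneg_right hε18 (by positivity)
            linarith only [hmul, h18, mul_nonneg (mul_nonneg hσp.le hsε.le) hnn]
    · rw [← hysum, inv_mul_le_iff₀ hTpos]
      calc ∑ i, y (x i) ≤ 17/9*σP^2*n := hx3
        _ ≤ (T.card:ℝ) * (2*σP^2) := by
            have hmul := mul_le_mul_of_nonneg_left hcard_ge (sq_nonneg σP)
            have h18 : ε * (σP^2 * n) ≤ (1/18) * (σP^2 * n) :=
              mul_le_mul_of_nonneg_right hε18 (by positivity)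
            linarith only [hmul, h18, mul_nonneg (sq_nonneg σP) hnn]
  -- assemble
  have hGc_meas : μpi Gᶜ ≤ ENNReal.ofReal (4 * e60) := by
    calc μpi Gᶜ ≤ μpi ({x : Fin n → ℝ | 8/9*ε*n ≤ ∑ i, (w (x i) - ε/9)} ∪
        ({x | σP*sε*n/2 ≤ ∑ i, (z (x i) - m0)} ∪
          ({x | σP*sε*n/2 ≤ ∑ i, (-z (x i) - m0)} ∪
            {x | 8/9*σP^2*n ≤ ∑ i, (y (x i) - σP^2)}))) := measure_mono hGc
      _ ≤ μpi {x : Fin n → ℝ | 8/9*ε*n ≤ ∑ i, (w (x i) - ε/9)} +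
          (μpi {x | σP*sε*n/2 ≤ ∑ i, (z (x i) - m0)} +
            (μpi {x | σP*sε*n/2 ≤ ∑ i, (-z (x i) - m0)} +
              μpi {x | 8/9*σP^2*n ≤ ∑ i, (y (x i) - σP^2)})) := by
          refine le_trans (measure_union_le _ _) ?_
          gcongr
          refine le_trans (measure_union_le _ _) ?_
          gcongr
          exact measure_union_le _ _
      _ ≤ ENNReal.ofReal e60 + (ENNReal.ofReal e60 + (ENNReal.ofReal e60 +
            ENNReal.ofReal e60)) := by
          exact add_le_add hbad1 (add_le_add hbad2 (add_le_add hbad3 hbad4))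
      _ = ENNReal.ofReal (4 * e60) := by
          rw [← ENNReal.ofReal_add he60pos.le he60pos.le,
            ← ENNReal.ofReal_add he60pos.le (by positivity),
            ← ENNReal.ofReal_add he60pos.le (by positivity)]
          congr 1
          ring
  have hkey : 4 * e60 ≤ 3 * Real.exp (-(1/120 * n * ε)) := by
    have h1 : Real.exp (-(1/120 * n * ε)) < 1/3 := by linarith only [h0]
    have h2 : e60 = Real.exp (-(1/120*(n:ℝ)*ε)) * Real.exp (-(1/120*(n:ℝ)*ε)) := by
      rw [he60, ← Real.exp_add]
      congr 1
      ring
    have hx := Real.exp_pos (-(1/120*(n:ℝ)*ε))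
    have hprod : 0 ≤ (1/3 - Real.exp (-(1/120*(n:ℝ)*ε))) * Real.exp (-(1/120*(n:ℝ)*ε)) :=
      mul_nonneg (by linarith only [h1]) hx.le
    linarith only [h2, hprod, hx.le]
  have hcompl_le : μpi Gᶜ ≤ ENNReal.ofReal (3 * Real.exp (-(1/120 * n * ε))) :=
    le_trans hGc_meas (ENNReal.ofReal_le_ofReal hkey)
  have hGtotal : μpi G + μpi Gᶜ = 1 := by
    rw [measure_add_measure_compl hGm, measure_univ]
  have h1G : ENNReal.ofReal (1 - 3 * Real.exp (-(1/120 * n * ε))) ≤ μpi G := by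
    have hstep : ENNReal.ofReal (1 - 3 * Real.exp (-(1/120 * n * ε))) + μpi Gᶜ
        ≤ μpi G + μpi Gᶜ := by
      calc ENNReal.ofReal (1 - 3 * Real.exp (-(1/120 * n * ε))) + μpi Gᶜ
          ≤ ENNReal.ofReal (1 - 3 * Real.exp (-(1/120 * n * ε))) +
            ENNReal.ofReal (3 * Real.exp (-(1/120 * n * ε))) := by gcongr
        _ = ENNReal.ofReal ((1 - 3 * Real.exp (-(1/120 * n * ε))) +
            3 * Real.exp (-(1/120 * n * ε))) := by
            rw [ENNReal.ofReal_add h0.le (by positivity)]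
        _ = 1 := by norm_num
        _ = μpi G + μpi Gᶜ := hGtotal.symm
    exact ENNReal.le_of_add_le_add_right (measure_ne_top _ _) hstep
  exact le_trans h1G (measure_mono hGsub)

end
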